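/- In the p = 1, A = ∞ case there is no maximizer: for every decreasing u : (0,∞) → [0,∞) with u not identically 0 and ∫₀^∞ u(t) dt ≤ B, one has ∫₀^∞ G(u(t)) dt < B, while the functions u_n = (B/n)·χ_{(0,n)} satisfy ∫₀^∞ G(u_n(t)) dt = n·G(B/n) → B as n → ∞. -/

import Mathlib

open MeasureTheory

/-- The concentration function `G(s) = ∫₀ˢ exp(-(d!·τ)^{1/d}) dτ`. -/
noncomputable def G (d : ℕ) (s : ℝ) : ℝ :=
  ∫ τ in (0:ℝ)..s, Real.exp (-(((d.factorial : ℝ) * τ) ^ ((1:ℝ) / (d : ℝ))))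

noncomputable def fG (d : ℕ) (τ : ℝ) : ℝ :=
  Real.exp (-(((d.factorial : ℝ) * τ) ^ ((1:ℝ) / (d : ℝ))))

lemma G_eq (d : ℕ) (s : ℝ) : G d s = ∫ τ in (0:ℝ)..s, fG d τ := rfl

lemma fG_cont (d : ℕ) : Continuous (fG d) := by
  have h1 : (0:ℝ) ≤ 1 / (d:ℝ) := by positivity
  exact (Real.continuous_exp.comp ((Real.continuous_rpow_const h1).comp
    (continuous_const.mul continuous_id)).neg)

lemma fG_le_one (d : ℕ) {τ : ℝ} (hτ : 0 ≤ τ) : fG d τ ≤ 1 := by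
  rw [fG, Real.exp_le_one_iff, neg_nonpos]
  exact Real.rpow_nonneg (by positivity) _

lemma fG_pos (d : ℕ) (τ : ℝ) : 0 < fG d τ := Real.exp_pos _

lemma fG_lt_one (d : ℕ) (hd : 1 ≤ d) {τ : ℝ} (hτ : 0 < τ) : fG d τ < 1 := by
  rw [fG, Real.exp_lt_one_iff, neg_neg_iff_pos]
  exact Real.rpow_pos_of_pos (by positivity) _

lemma fG_anti (d : ℕ) : AntitoneOn (fG d) (Set.Ici 0) := by
  intro a ha b hb hab
  rw [fG, fG, Real.exp_le_exp, neg_le_neg_iff]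
  exact Real.rpow_le_rpow (mul_nonneg (by positivity) ha)
    (mul_le_mul_of_nonneg_left hab (by positivity)) (by positivity)

lemma G_zero (d : ℕ) : G d 0 = 0 := intervalIntegral.integral_same

lemma fG_intInt (d : ℕ) (a b : ℝ) : IntervalIntegrable (fG d) volume a b :=
  (fG_cont d).intervalIntegrable a b

lemma G_le (d : ℕ) {s : ℝ} (hs : 0 ≤ s) : G d s ≤ s := by
  calc G d s ≤ ∫ _ in (0:ℝ)..s, (1:ℝ) := by
        apply intervalIntegral.integral_mono_on hs (fG_intInt d 0 s)
          (intervalIntegrable_const)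
        intro x hx; exact fG_le_one d hx.1
    _ = s := by simp

lemma G_nonneg (d : ℕ) {s : ℝ} (hs : 0 ≤ s) : 0 ≤ G d s := by
  rw [G_eq]
  apply intervalIntegral.integral_nonneg hs
  intro x _; exact (fG_pos d x).le

lemma G_lt (d : ℕ) (hd : 1 ≤ d) {s : ℝ} (hs : 0 < s) : G d s < s := by
  have hhalf : (0:ℝ) < s / 2 := by linarith
  have hsplit : G d s = (∫ τ in (0:ℝ)..(s/2), fG d τ) + ∫ τ in (s/2)..s, fG d τ := by
    rw [G_eq, intervalIntegral.integral_add_adjacent_intervals (fG_intInt d 0 (s/2))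
      (fG_intInt d (s/2) s)]
  have h1 : (∫ τ in (0:ℝ)..(s/2), fG d τ) ≤ s / 2 := by
    have := G_le d hhalf.le; rwa [G_eq] at this
  have h2 : (∫ τ in (s/2)..s, fG d τ) ≤ (s - s/2) * fG d (s/2) := by
    calc (∫ τ in (s/2)..s, fG d τ) ≤ ∫ _ in (s/2)..s, fG d (s/2) := by
          apply intervalIntegral.integral_mono_on (by linarith) (fG_intInt d _ _)
            intervalIntegrable_const
          intro x hx
          exact fG_anti d (Set.mem_Ici.2 hhalf.le) (Set.mem_Ici.2 (by linarith [hx.1]))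
            hx.1
      _ = (s - s/2) * fG d (s/2) := by simp [mul_comm]
  have h3 : fG d (s/2) < 1 := fG_lt_one d hd hhalf
  have : (s - s/2) * fG d (s/2) < (s - s/2) * 1 := by
    apply mul_lt_mul_of_pos_left h3 (by linarith)
  nlinarith

lemma G_ge (d : ℕ) {s : ℝ} (hs : 0 ≤ s) : s * fG d s ≤ G d s := by
  rw [G_eq]
  calc s * fG d s = ∫ _ in (0:ℝ)..s, fG d s := by simp [mul_comm]
    _ ≤ ∫ τ in (0:ℝ)..s, fG d τ := by
        apply intervalIntegral.integral_mono_on hs intervalIntegrable_const (fG_intInt d 0 s)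
        intro x hx
        exact fG_anti d (Set.mem_Ici.2 hx.1) (Set.mem_Ici.2 hs) hx.2

lemma part2 (d : ℕ) (B : ℝ) (n : ℕ) :
    (∫ t in Set.Ioi (0:ℝ), G d (if t < n then B / n else 0)) = n * G d (B / n) := by
  have hcong : ∀ t ∈ Set.Ioi (0:ℝ),
      G d (if t < n then B / n else 0)
        = Set.indicator (Set.Iio (n:ℝ)) (fun _ => G d (B / n)) t := by
    intro t _
    by_cases h : t < (n:ℝ)
    · simp [Set.indicator_apply, Set.mem_Iio, h]
    · simp [Set.indicator_apply, Set.mem_Iio, h, G_zero]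
  rw [setIntegral_congr_fun measurableSet_Ioi hcong,
    setIntegral_indicator measurableSet_Iio, setIntegral_const]
  have : Set.Ioi (0:ℝ) ∩ Set.Iio (n:ℝ) = Set.Ioo (0:ℝ) (n:ℝ) := rfl
  rw [this, Measure.real, Real.volume_Ioo, sub_zero, ENNReal.toReal_ofReal (Nat.cast_nonneg n),
    smul_eq_mul]

lemma part3 (d : ℕ) (hd : 1 ≤ d) (B : ℝ) (hB : 0 < B) :
    Filter.Tendsto (fun n : ℕ => (n : ℝ) * G d (B / n)) Filter.atTop (nhds B) := by
  have hdR : (0:ℝ) < d := by exact_mod_cast hd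
  have hf0 : fG d 0 = 1 := by
    rw [fG, mul_zero, Real.zero_rpow (by positivity : (1:ℝ)/(d:ℝ) ≠ 0), neg_zero, Real.exp_zero]
  have htend : Filter.Tendsto (fun n : ℕ => B * fG d (B / n)) Filter.atTop (nhds B) := by
    have h1 : Filter.Tendsto (fun n : ℕ => B / (n:ℝ)) Filter.atTop (nhds 0) :=
      tendsto_const_div_atTop_nhds_zero_nat B
    have := ((fG_cont d).tendsto 0).comp h1
    rw [hf0] at this
    simpa using (this.const_mul B)
  apply tendsto_of_tendsto_of_tendsto_of_le_of_le' htend tendsto_const_nhds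
  · filter_upwards [Filter.eventually_gt_atTop 0] with n hn
    have hn' : (0:ℝ) < n := Nat.cast_pos.2 hn
    have hBn : 0 < B / n := by positivity
    have := G_ge d hBn.le
    calc B * fG d (B / n) = n * (B / n * fG d (B / n)) := by field_simp
      _ ≤ n * G d (B / n) := by nlinarith
  · filter_upwards [Filter.eventually_gt_atTop 0] with n hn
    have hn' : (0:ℝ) < n := Nat.cast_pos.2 hn
    have hBn : 0 < B / n := by positivity
    have := G_le d hBn.le
    calc (n:ℝ) * G d (B / n) ≤ n * (B / n) := by nlinarith
      _ = B := by field_simp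

lemma G_cont (d : ℕ) : Continuous (G d) :=
  intervalIntegral.continuous_primitive (fun a b => fG_intInt d a b) 0

lemma part1 (d : ℕ) (hd : 1 ≤ d) (B : ℝ) (hB : 0 < B)
    (u : ℝ → ℝ) (hmono : AntitoneOn u (Set.Ioi 0)) (hnn : ∀ t ∈ Set.Ioi (0:ℝ), 0 ≤ u t)
    (hne : ∃ t ∈ Set.Ioi (0:ℝ), u t ≠ 0)
    (hint : (∫⁻ t in Set.Ioi (0:ℝ), ENNReal.ofReal (u t)) ≤ ENNReal.ofReal B) :
    (∫ t in Set.Ioi (0:ℝ), G d (u t)) < B := by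
  obtain ⟨t₀, ht₀, hu0⟩ := hne
  have hut₀ : 0 < u t₀ := lt_of_le_of_ne (hnn t₀ ht₀) (Ne.symm hu0)
  set μ := volume.restrict (Set.Ioi (0:ℝ)) with hμ
  have hmeas : AEMeasurable u μ :=
    aemeasurable_restrict_of_antitoneOn measurableSet_Ioi hmono
  have hae_mem : ∀ᵐ t ∂μ, t ∈ Set.Ioi (0:ℝ) := ae_restrict_mem measurableSet_Ioi
  have hae_nn : ∀ᵐ t ∂μ, 0 ≤ u t := hae_mem.mono fun t ht => hnn t ht
  have hu_int : Integrable u μ := by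
    refine ⟨hmeas.aestronglyMeasurable, ?_⟩
    rw [HasFiniteIntegral]
    have heq : (∫⁻ t, ‖u t‖ₑ ∂μ) = ∫⁻ t, ENNReal.ofReal (u t) ∂μ := by
      apply lintegral_congr_ae
      filter_upwards [hae_nn] with t ht
      rw [← Real.enorm_eq_ofReal ht]
    rw [heq]
    exact lt_of_le_of_lt hint ENNReal.ofReal_lt_top
  have hint_real : (∫ t, u t ∂μ) ≤ B := by
    rw [integral_eq_lintegral_of_nonneg_ae hae_nn hmeas.aestronglyMeasurable]
    exact ENNReal.toReal_le_of_le_ofReal hB.le hint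
  have hGu_int : Integrable (fun t => G d (u t)) μ := by
    apply Integrable.mono hu_int
      ((G_cont d).measurable.comp_aemeasurable hmeas).aestronglyMeasurable
    filter_upwards [hae_nn] with t ht
    show |(G d ∘ u) t| ≤ |u t|
    rw [Function.comp_apply, abs_of_nonneg (G_nonneg d ht), abs_of_nonneg ht]
    exact G_le d ht
  have hdiff_int : Integrable (fun t => u t - G d (u t)) μ := hu_int.sub hGu_int
  have hdiff_nn : 0 ≤ᵐ[μ] fun t => u t - G d (u t) :=
    hae_nn.mono fun t ht => sub_nonneg.2 (G_le d ht)
  have hsupp : 0 < μ (Function.support fun t => u t - G d (u t)) := by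
    have hsub : Set.Ioo 0 t₀ ⊆ Function.support fun t => u t - G d (u t) := by
      intro t ht
      have h1 : u t₀ ≤ u t := hmono ht.1 ht₀ ht.2.le
      have h2 : 0 < u t := lt_of_lt_of_le hut₀ h1
      have h3 := G_lt d hd h2
      simp only [Function.mem_support]
      intro hc
      nlinarith
    calc (0:ENNReal) < ENNReal.ofReal t₀ := by
          simpa using (Set.mem_Ioi.1 ht₀)
      _ = μ (Set.Ioo 0 t₀) := by
          rw [hμ, Measure.restrict_apply measurableSet_Ioo,
            Set.inter_eq_left.2 Set.Ioo_subset_Ioi_self, Real.volume_Ioo, sub_zero]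
      _ ≤ _ := measure_mono hsub
  have hpos : 0 < ∫ t, (u t - G d (u t)) ∂μ :=
    (integral_pos_iff_support_of_nonneg_ae hdiff_nn hdiff_int).2 hsupp
  have hsub_eq : ∫ t, (u t - G d (u t)) ∂μ = (∫ t, u t ∂μ) - ∫ t, G d (u t) ∂μ :=
    integral_sub hu_int hGu_int
  rw [hsub_eq] at hpos
  calc (∫ t in Set.Ioi (0:ℝ), G d (u t)) = ∫ t, G d (u t) ∂μ := rfl
    _ < ∫ t, u t ∂μ := by linarith
    _ ≤ B := hint_real

theorem stmt_13 (d : ℕ) (hd : 1 ≤ d) (B : ℝ) (hB : 0 < B) :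
    (∀ u : ℝ → ℝ, AntitoneOn u (Set.Ioi 0) → (∀ t ∈ Set.Ioi (0:ℝ), 0 ≤ u t) →
      (∃ t ∈ Set.Ioi (0:ℝ), u t ≠ 0) →
      (∫⁻ t in Set.Ioi (0:ℝ), ENNReal.ofReal (u t)) ≤ ENNReal.ofReal B →
      (∫ t in Set.Ioi (0:ℝ), G d (u t)) < B) ∧
    (∀ n : ℕ, (∫ t in Set.Ioi (0:ℝ), G d (if t < n then B / n else 0))
        = n * G d (B / n)) ∧
    Filter.Tendsto (fun n : ℕ => (n : ℝ) * G d (B / n)) Filter.atTop (nhds B) := by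
  exact ⟨fun u h1 h2 h3 h4 => part1 d hd B hB u h1 h2 h3 h4, part2 d B, part3 d hd B hB⟩
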